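/- On the characteristic set Σ = {μξ² + η² + ν²/sin²θ + 2aξν = 0} (with (ξ,η,ν) ≠ 0), one has ξ ≠ 0, and moreover there is a constant c > 0 (depending only on m, a) such that ξ² > c(η² + ν²/sin²θ) on Σ. -/

import Mathlib

/-- On the characteristic set `Σ = {μξ² + η² + ν²/sin²θ + 2aξν = 0}` (zero section
excluded) one has `ξ ≠ 0`, and there is `c > 0`, depending only on `m, a`, with
`ξ² > c(η² + ν²/sin²θ)` on `Σ`. -/
theorem kerr_char_set_xi_elliptic (m a : ℝ) (hm : 0 < m) (ha : -m < a ∧ a < m) :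
    ∃ c > 0, ∀ r θ ξ η ν : ℝ, 0 < r → 0 < θ → θ < Real.pi →
      ¬(ξ = 0 ∧ η = 0 ∧ ν = 0) →
      (r ^ 2 - 2 * m * r + a ^ 2) * ξ ^ 2 + η ^ 2 + ν ^ 2 / Real.sin θ ^ 2
          + 2 * a * ξ * ν = 0 →
      ξ ≠ 0 ∧ c * (η ^ 2 + ν ^ 2 / Real.sin θ ^ 2) < ξ ^ 2 := by
  refine ⟨1 / (2 * (m ^ 2 + a ^ 2) + 1), by positivity, ?_⟩
  intro r θ ξ η ν hr hθ hθπ hnz heq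
  set s := Real.sin θ with hs_def
  have hs : 0 < s := Real.sin_pos_of_pos_of_lt_pi hθ hθπ
  have hs1 : s ≤ 1 := Real.sin_le_one θ
  have hs2 : s ^ 2 ≠ 0 := by positivity
  set t := ν / s with ht_def
  have hν : ν = t * s := by rw [ht_def]; field_simp
  have hts : ν ^ 2 / s ^ 2 = t ^ 2 := by rw [hν]; field_simp
  rw [hts] at heq ⊢
  have hξ : ξ ≠ 0 := by
    intro h0
    rw [h0] at heq
    have hη : η = 0 := by nlinarith [sq_nonneg η, sq_nonneg t]
    have ht0 : t = 0 := by nlinarith [sq_nonneg η, sq_nonneg t]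
    exact hnz ⟨h0, hη, by rw [hν, ht0]; ring⟩
  refine ⟨hξ, ?_⟩
  have hξ2 : 0 < ξ ^ 2 := by positivity
  rw [hν] at heq
  have hss : s ^ 2 ≤ 1 := by nlinarith
  rw [div_mul_eq_mul_div, div_lt_iff₀ (by positivity)]
  nlinarith [sq_nonneg (r - m), sq_nonneg (2 * a * s * ξ + t), sq_nonneg η,
    mul_nonneg (sq_nonneg a) (sq_nonneg ξ), sq_nonneg t,
    mul_nonneg (mul_nonneg (sq_nonneg a) (sq_nonneg ξ)) (sub_nonneg.mpr hss),
    mul_pos hξ2 hξ2]
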